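/- Let p ≤ q and e be positive integers with 0 ≤ pq − e ≤ q. Then the spectral radius of K_{p,q}^{[e]} equals sqrt((X + sqrt(X² − 4Y))/2), where X = 2e − (p·(q − pq + e) + q·(p−1) − (q − pq + e)·(p−1)) and Y = (e − p·(q − pq + e))·(e − q·(p−1)). -/

import Mathlib

open Matrix Finset

noncomputable def specRad {V : Type*} [Fintype V] (G : SimpleGraph V) : ℝ :=
  letI := Classical.decEq V
  letI := Classical.decRel G.Adj
  sSup (spectrum ℝ (G.adjMatrix ℝ))

/-- `K_{p,q}^{[e]}` for `p ≤ q`: the complete bipartite graph `K_{p,q}` with `pq - e` edges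
deleted, all incident on a common vertex (the last one) of the partite set of order `p`. -/
def KpqEbracket (p q e : ℕ) : SimpleGraph (Fin p ⊕ Fin q) :=
  SimpleGraph.fromRel (fun x y =>
    match x, y with
    | Sum.inl i, Sum.inr j => i.val < p - 1 ∨ j.val < q - (p * q - e)
    | _, _ => False)


private lemma sum_fin_ite {N m : ℕ} (hm : m ≤ N) (x y : ℝ) :
    ∑ i : Fin N, (if (i : ℕ) < m then x else y) = (m : ℝ) * x + ((N - m : ℕ) : ℝ) * y := by
  rw [Fin.sum_univ_eq_sum_range (fun i => if i < m then x else y) N]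
  rw [Finset.range_eq_Ico, ← Finset.sum_Ico_consecutive _ (Nat.zero_le m) hm]
  have e1 : ∑ i ∈ Finset.Ico 0 m, (if i < m then x else y) = (m : ℝ) * x := by
    rw [Finset.sum_congr rfl (fun i hi => if_pos (Finset.mem_Ico.mp hi).2)]
    simp [Finset.sum_const, Nat.card_Ico, nsmul_eq_mul]
  have e2 : ∑ i ∈ Finset.Ico m N, (if i < m then x else y) = ((N - m : ℕ) : ℝ) * y := by
    rw [Finset.sum_congr rfl (fun i hi => if_neg (by simpa using (Finset.mem_Ico.mp hi).1))]
    simp [Finset.sum_const, Nat.card_Ico, nsmul_eq_mul]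
  rw [e1, e2]

private lemma sSup_spectrum_eq {n : Type*} [Fintype n] [DecidableEq n] (A : Matrix n n ℝ) (μ : ℝ)
    (h1 : ∃ v : n → ℝ, v ≠ 0 ∧ A.mulVec v = μ • v)
    (h2 : ∀ (l : ℝ) (v : n → ℝ), v ≠ 0 → A.mulVec v = l • v → l ≤ μ) :
    sSup (spectrum ℝ A) = μ := by
  have key : ∀ l : ℝ, l ∈ spectrum ℝ A ↔ ∃ v : n → ℝ, v ≠ 0 ∧ A.mulVec v = l • v := by
    intro l
    rw [spectrum.mem_iff, Algebra.algebraMap_eq_smul_one,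
      Matrix.isUnit_iff_isUnit_det (l • 1 - A),
      isUnit_iff_ne_zero, not_ne_iff, ← Matrix.exists_mulVec_eq_zero_iff]
    constructor
    · rintro ⟨v, hv, hv0⟩
      rw [Matrix.sub_mulVec, Matrix.smul_mulVec, Matrix.one_mulVec, sub_eq_zero] at hv0
      exact ⟨v, hv, hv0.symm⟩
    · rintro ⟨v, hv, hv0⟩
      refine ⟨v, hv, ?_⟩
      rw [Matrix.sub_mulVec, Matrix.smul_mulVec, Matrix.one_mulVec, hv0, sub_self]
  apply IsGreatest.csSup_eq
  constructor
  · exact (key μ).mpr h1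
  · intro l hl
    obtain ⟨v, hv, hav⟩ := (key l).mp hl
    exact h2 l v hv hav

set_option maxHeartbeats 1600000 in
private lemma main_aux (p q e : ℕ) (hp : 0 < p) (he : 0 < e) (hpq : p ≤ q)
    (h1 : e ≤ p * q) (h2 : p * q - e ≤ q)
    (X Y : ℝ)
    (hX : X = 2 * (e : ℝ) - ((p : ℝ) * ((q : ℝ) - (p : ℝ) * (q : ℝ) + (e : ℝ))
      + (q : ℝ) * ((p : ℝ) - 1)
      - ((q : ℝ) - (p : ℝ) * (q : ℝ) + (e : ℝ)) * ((p : ℝ) - 1)))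
    (hY : Y = ((e : ℝ) - (p : ℝ) * ((q : ℝ) - (p : ℝ) * (q : ℝ) + (e : ℝ)))
      * ((e : ℝ) - (q : ℝ) * ((p : ℝ) - 1)))
    (instE : DecidableEq (Fin p ⊕ Fin q)) (instR : DecidableRel (KpqEbracket p q e).Adj) :
    sSup (spectrum ℝ ((KpqEbracket p q e).adjMatrix ℝ)) =
      Real.sqrt ((X + Real.sqrt (X^2 - 4 * Y)) / 2) := by
  -- abbreviations
  set b' : ℕ := q - (p * q - e) with hb'def
  set c' : ℕ := p * q - e with hc'def
  have hb'q : b' ≤ q := Nat.sub_le _ _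
  have hqb' : q - b' = c' := Nat.sub_sub_self h2
  -- real class sizes
  set ra : ℝ := ((p - 1 : ℕ) : ℝ) with hra_def
  set rb : ℝ := ((b' : ℕ) : ℝ) with hrb_def
  set rc : ℝ := ((c' : ℕ) : ℝ) with hrc_def
  have hra : ra = (p : ℝ) - 1 := by
    rw [hra_def, Nat.cast_sub hp]; norm_num
  have hrc : rc = (p : ℝ) * q - e := by
    rw [hrc_def, hc'def, Nat.cast_sub h1]; push_cast; ring
  have hrb : rb = (q : ℝ) - ((p : ℝ) * q - e) := by
    rw [hrb_def, hb'def, Nat.cast_sub h2, ← hrc_def, hrc]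
  have hra0 : 0 ≤ ra := Nat.cast_nonneg _
  have hrb0 : 0 ≤ rb := Nat.cast_nonneg _
  have hrc0 : 0 ≤ rc := Nat.cast_nonneg _
  -- X, Y in terms of ra rb rc
  have hXabc : X = ra * rb + ra * rc + rb := by
    rw [hX, hra, hrb, hrc]; ring
  have hYabc : Y = ra * rb * rc := by
    rw [hY, hra, hrb, hrc]; ring
  have hXe : X = (e : ℝ) := by rw [hXabc, hra, hrb, hrc]; ring
  have hXpos : 0 < X := by rw [hXe]; exact_mod_cast he
  -- the class map and pattern matrix
  set π : Fin p ⊕ Fin q → Fin 4 := fun u => match u with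
    | .inl i => if (i : ℕ) < p - 1 then 0 else 1
    | .inr j => if (j : ℕ) < b' then 2 else 3
    with hπ
  set Q0 : Matrix (Fin 4) (Fin 4) ℝ := !![0,0,1,1; 0,0,1,0; 1,1,0,0; 1,0,0,0] with hQ0
  set nn : Fin 4 → ℝ := ![ra, 1, rb, rc] with hnn
  set D : Matrix (Fin 4) (Fin 4) ℝ := Matrix.diagonal nn with hD
  set lift : Matrix (Fin 4) (Fin 4) ℝ → Matrix (Fin p ⊕ Fin q) (Fin p ⊕ Fin q) ℝ :=
    fun S => Matrix.of (fun u v => S (π u) (π v)) with hlift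
  -- the key sum lemma
  have hsum : ∀ f : Fin 4 → ℝ, ∑ u : Fin p ⊕ Fin q, f (π u) = ∑ k : Fin 4, nn k * f k := by
    intro f
    rw [Fintype.sum_sum_type]
    have e1 : ∑ i : Fin p, f (π (Sum.inl i))
        = ((p - 1 : ℕ) : ℝ) * f 0 + ((p - (p - 1) : ℕ) : ℝ) * f 1 := by
      rw [← sum_fin_ite (Nat.sub_le p 1) (f 0) (f 1)]
      refine Finset.sum_congr rfl fun i _ => ?_
      by_cases h : (i : ℕ) < p - 1 <;> simp [hπ, h]
    have e2 : ∑ j : Fin q, f (π (Sum.inr j))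
        = ((b' : ℕ) : ℝ) * f 2 + ((q - b' : ℕ) : ℝ) * f 3 := by
      rw [← sum_fin_ite hb'q (f 2) (f 3)]
      refine Finset.sum_congr rfl fun j _ => ?_
      by_cases h : (j : ℕ) < b' <;> simp [hπ, h]
    rw [e1, e2, Nat.sub_sub_self hp, hqb']
    simp [Fin.sum_univ_four, hnn, ← hra_def, ← hrb_def, ← hrc_def]
    ring
  -- lift is multiplicative (with weight D)
  have hmul : ∀ S T : Matrix (Fin 4) (Fin 4) ℝ, lift S * lift T = lift (S * D * T) := by
    intro S T
    ext u v
    simp only [hlift, Matrix.mul_apply, Matrix.of_apply]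
    rw [hsum (fun k => S (π u) k * T k (π v))]
    refine Finset.sum_congr rfl fun k _ => ?_
    rw [← Matrix.mul_apply, hD, Matrix.mul_diagonal]
    ring
  have hlin : ∀ (x y : ℝ) (S T : Matrix (Fin 4) (Fin 4) ℝ),
      lift (x • S - y • T) = x • lift S - y • lift T := by
    intro x y S T; ext u v; simp [hlift]
  -- the adjacency matrix is a lift
  set Am : Matrix (Fin p ⊕ Fin q) (Fin p ⊕ Fin q) ℝ := (KpqEbracket p q e).adjMatrix ℝ with hAm
  have hA : Am = lift Q0 := by
    ext u v
    rcases u with i | i <;> rcases v with j | j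
    all_goals rw [hAm, SimpleGraph.adjMatrix_apply]
    · by_cases hi : (i : ℕ) < p - 1 <;> by_cases hj : (j : ℕ) < p - 1 <;>
        simp [hAm, hlift, KpqEbracket, SimpleGraph.fromRel_adj, hπ, hQ0, hi, hj, Matrix.vecHead, Matrix.vecTail] <;>
        (have := hb'def; have := hc'def; omega)
    · by_cases hi : (i : ℕ) < p - 1 <;> by_cases hj : (j : ℕ) < b' <;>
        simp [hAm, hlift, KpqEbracket, SimpleGraph.fromRel_adj, hπ, hQ0, hi, hj, Matrix.vecHead, Matrix.vecTail] <;>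
        (have := hb'def; have := hc'def; omega)
    · by_cases hi : (i : ℕ) < b' <;> by_cases hj : (j : ℕ) < p - 1 <;>
        simp [hAm, hlift, KpqEbracket, SimpleGraph.fromRel_adj, hπ, hQ0, hi, hj, Matrix.vecHead, Matrix.vecTail] <;>
        (have := hb'def; have := hc'def; omega)
    · by_cases hi : (i : ℕ) < b' <;> by_cases hj : (j : ℕ) < b' <;>
        simp [hAm, hlift, KpqEbracket, SimpleGraph.fromRel_adj, hπ, hQ0, hi, hj, Matrix.vecHead, Matrix.vecTail] <;>
        (have := hb'def; have := hc'def; omega)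
  -- the 4×4 Cayley–Hamilton style identity
  have hQD : Q0 * D = !![0,0,rb,rc; 0,0,rb,0; ra,1,0,0; ra,0,0,0] := by
    ext i j
    rw [hD, Matrix.mul_diagonal]
    fin_cases i <;> fin_cases j <;>
      simp [hQ0, hnn, Matrix.vecHead, Matrix.vecTail]
  have t1 : (!![0,0,rb,rc; 0,0,rb,0; ra,1,0,0; ra,0,0,0] : Matrix (Fin 4) (Fin 4) ℝ) * Q0
      = !![rb+rc, rb,0,0; rb,rb,0,0; 0,0,ra+1,ra; 0,0,ra,ra] := by
    ext i j
    rw [Matrix.mul_apply, Fin.sum_univ_four]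
    fin_cases i <;> fin_cases j <;> simp [hQ0, Matrix.vecHead, Matrix.vecTail] <;> ring
  have t2 : (!![rb+rc, rb,0,0; rb,rb,0,0; 0,0,ra+1,ra; 0,0,ra,ra] :
        Matrix (Fin 4) (Fin 4) ℝ) * D
      = !![(rb+rc)*ra, rb,0,0; rb*ra, rb,0,0; 0,0,(ra+1)*rb, ra*rc; 0,0, ra*rb, ra*rc] := by
    ext i j
    rw [hD, Matrix.mul_diagonal]
    fin_cases i <;> fin_cases j <;> simp [hnn, Matrix.vecHead, Matrix.vecTail] <;> ring
  have t3 : (!![(rb+rc)*ra, rb,0,0; rb*ra, rb,0,0; 0,0,(ra+1)*rb, ra*rc; 0,0, ra*rb, ra*rc] :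
        Matrix (Fin 4) (Fin 4) ℝ) * Q0
      = !![0,0, (rb+rc)*ra+rb, (rb+rc)*ra; 0,0, rb*ra+rb, rb*ra;
          (ra+1)*rb+ra*rc, (ra+1)*rb, 0,0; ra*rb+ra*rc, ra*rb, 0,0] := by
    ext i j
    rw [Matrix.mul_apply, Fin.sum_univ_four]
    fin_cases i <;> fin_cases j <;> simp [hQ0, Matrix.vecHead, Matrix.vecTail] <;> ring
  have t4 : (!![0,0, (rb+rc)*ra+rb, (rb+rc)*ra; 0,0, rb*ra+rb, rb*ra;
          (ra+1)*rb+ra*rc, (ra+1)*rb, 0,0; ra*rb+ra*rc, ra*rb, 0,0] :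
        Matrix (Fin 4) (Fin 4) ℝ) * D
      = !![0,0, ((rb+rc)*ra+rb)*rb, (rb+rc)*ra*rc; 0,0, (rb*ra+rb)*rb, rb*ra*rc;
          ((ra+1)*rb+ra*rc)*ra, (ra+1)*rb, 0,0; (ra*rb+ra*rc)*ra, ra*rb, 0,0] := by
    ext i j
    rw [hD, Matrix.mul_diagonal]
    fin_cases i <;> fin_cases j <;> simp [hnn, Matrix.vecHead, Matrix.vecTail] <;> ring
  have hfin : (!![0,0, ((rb+rc)*ra+rb)*rb, (rb+rc)*ra*rc; 0,0, (rb*ra+rb)*rb, rb*ra*rc;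
          ((ra+1)*rb+ra*rc)*ra, (ra+1)*rb, 0,0; (ra*rb+ra*rc)*ra, ra*rb, 0,0] :
        Matrix (Fin 4) (Fin 4) ℝ) *
      !![rb+rc, rb,0,0; rb,rb,0,0; 0,0,ra+1,ra; 0,0,ra,ra]
      = X • (!![0,0, (rb+rc)*ra+rb, (rb+rc)*ra; 0,0, rb*ra+rb, rb*ra;
          (ra+1)*rb+ra*rc, (ra+1)*rb, 0,0; ra*rb+ra*rc, ra*rb, 0,0] :
            Matrix (Fin 4) (Fin 4) ℝ) - Y • Q0 := by
    rw [hXabc, hYabc, hQ0]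
    ext i j
    rw [Matrix.mul_apply, Fin.sum_univ_four]
    fin_cases i <;> fin_cases j <;> simp [Matrix.vecHead, Matrix.vecTail] <;> ring
  have hM : (Q0 * D * Q0 * D * Q0) * D * (Q0 * D * Q0)
      = X • (Q0 * D * Q0 * D * Q0) - Y • Q0 := by
    rw [hQD, t1, t2, t3, t4]
    exact hfin
  -- lifted identity
  have e2m : lift Q0 * lift Q0 = lift (Q0 * D * Q0) := hmul _ _
  have e3m : lift (Q0 * D * Q0) * lift Q0 = lift (Q0 * D * Q0 * D * Q0) := hmul _ _
  have e5m : lift (Q0 * D * Q0 * D * Q0) * lift (Q0 * D * Q0)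
      = lift ((Q0 * D * Q0 * D * Q0) * D * (Q0 * D * Q0)) := hmul _ _
  have hA5 : (Am * Am * Am) * (Am * Am) = X • (Am * Am * Am) - Y • Am := by
    rw [hA, e2m, e3m, e5m, hM, hlin]
  -- the spectral quantities
  set d : ℝ := X ^ 2 - 4 * Y with hd_def
  have hd0 : 0 ≤ d := by
    have : d = (ra * rb + ra * rc - rb) ^ 2 + 4 * (ra * (rb * rb)) := by
      rw [hd_def, hXabc, hYabc]; ring
    rw [this]
    have := sq_nonneg (ra * rb + ra * rc - rb)
    nlinarith [mul_nonneg hra0 (mul_nonneg hrb0 hrb0)]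
  have hs2 : Real.sqrt d ^ 2 = d := Real.sq_sqrt hd0
  set r1 : ℝ := (X + Real.sqrt d) / 2 with hr1_def
  have hr1pos : 0 < r1 := by
    have := Real.sqrt_nonneg d
    rw [hr1_def]; linarith
  set μ : ℝ := Real.sqrt r1 with hμ_def
  have hμpos : 0 < μ := Real.sqrt_pos.mpr hr1pos
  have hμ2 : μ ^ 2 = r1 := Real.sq_sqrt hr1pos.le
  have hμ4 : μ ^ 4 - X * μ ^ 2 + Y = 0 := by
    have h4 : μ ^ 4 = r1 ^ 2 := by rw [← hμ2]; ring
    rw [h4, hμ2, hr1_def]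
    have : Real.sqrt d ^ 2 = X ^ 2 - 4 * Y := by rw [hs2, hd_def]
    nlinarith [this]
  -- apply the generic lemma
  apply sSup_spectrum_eq
  · -- existence of an eigenvector for μ
    have hcomp : (!![-μ,0,rb,rc; 0,-μ,rb,0; ra,1,-μ,0; ra,0,0,-μ] :
        Matrix (Fin 4) (Fin 4) ℝ).det = μ^4 - X*μ^2 + Y := by
      rw [hXabc]
      rw [hYabc]
      simp [Matrix.det_succ_row_zero, Fin.sum_univ_succ, Matrix.vecHead, Matrix.vecTail]
      simp +decide [Fin.succAbove]
      ring
    have hQDm : Q0 * D - μ • 1 = !![-μ,0,rb,rc; 0,-μ,rb,0; ra,1,-μ,0; ra,0,0,-μ] := by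
      rw [hQD]
      ext i j
      fin_cases i <;> fin_cases j <;>
        simp [Matrix.one_apply, Matrix.vecHead, Matrix.vecTail]
    have hdet0 : (Q0 * D - μ • 1).det = 0 := by rw [hQDm, hcomp, hμ4]
    obtain ⟨w, hw0, hww⟩ := Matrix.exists_mulVec_eq_zero_iff.mpr hdet0
    have hQw : (Q0 * D).mulVec w = μ • w := by
      rw [Matrix.sub_mulVec, Matrix.smul_mulVec, Matrix.one_mulVec, sub_eq_zero] at hww
      exact hww
    have hQw' : ∀ i, ∑ k, Q0 i k * nn k * w k = μ * w i := by
      intro i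
      have h2 := congrFun hQw i
      rw [Matrix.mulVec, dotProduct] at h2
      simp only [Pi.smul_apply, smul_eq_mul] at h2
      rw [← h2]
      refine Finset.sum_congr rfl fun k _ => ?_
      rw [hD, Matrix.mul_diagonal]
    have hex : ∃ k : Fin 4, nn k ≠ 0 ∧ w k ≠ 0 := by
      by_contra hcon
      push_neg at hcon
      have hz : ∀ i, μ * w i = 0 := by
        intro i
        rw [← hQw' i]
        refine Finset.sum_eq_zero fun k _ => ?_
        by_cases hk : nn k = 0
        · rw [hk]; ring
        · rw [hcon k hk]; ring
      apply hw0
      funext i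
      have := hz i
      rcases mul_eq_zero.mp this with h | h
      · exact absurd h (ne_of_gt hμpos)
      · exact h
    obtain ⟨k, hk1, hk2⟩ := hex
    have hvert : ∃ u0 : Fin p ⊕ Fin q, π u0 = k := by
      fin_cases k
      · have hra' : 0 < p - 1 := by
          rcases Nat.eq_zero_or_pos (p - 1) with h | h
          · exfalso; apply hk1; simp [hnn, hra_def, h]
          · exact h
        exact ⟨Sum.inl ⟨0, hp⟩, by simp [hπ, hra']⟩
      · exact ⟨Sum.inl ⟨p - 1, Nat.sub_lt hp Nat.one_pos⟩, by simp [hπ]⟩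
      · have hb0 : 0 < b' := by
          rcases Nat.eq_zero_or_pos b' with h | h
          · exfalso; apply hk1; simp [hnn, hrb_def, h]
          · exact h
        exact ⟨Sum.inr ⟨0, lt_of_lt_of_le hb0 hb'q⟩, by simp [hπ, hb0]⟩
      · have hc0 : 0 < c' := by
          rcases Nat.eq_zero_or_pos c' with h | h
          · exfalso; apply hk1; simp [hnn, hrc_def, h]
          · exact h
        have hbq : b' < q := by omega
        exact ⟨Sum.inr ⟨b', hbq⟩, by simp [hπ]⟩
    obtain ⟨u0, hu0⟩ := hvert
    refine ⟨fun u => w (π u), ?_, ?_⟩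
    · intro hzero
      apply hk2
      have := congrFun hzero u0
      simpa [hu0] using this
    · funext u
      have heval : (Am.mulVec fun u => w (π u)) u = ∑ k', nn k' * (Q0 (π u) k' * w k') := by
        rw [hA, Matrix.mulVec, dotProduct]
        simp only [hlift, Matrix.of_apply]
        exact hsum (fun k' => Q0 (π u) k' * w k')
      rw [heval]
      have h2 := hQw' (π u)
      calc ∑ k', nn k' * (Q0 (π u) k' * w k')
          = ∑ k', Q0 (π u) k' * nn k' * w k' :=
            Finset.sum_congr rfl fun k' _ => by ring
        _ = μ * w (π u) := h2
        _ = (μ • fun u => w (π u)) u := rfl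
  · -- upper bound
    intro l v hv hav
    have h2v : (Am * Am).mulVec v = (l^2) • v := by
      rw [← Matrix.mulVec_mulVec, hav, Matrix.mulVec_smul, hav, smul_smul]
      norm_num [pow_two]
    have h3v : (Am * Am * Am).mulVec v = (l^3) • v := by
      rw [← Matrix.mulVec_mulVec, hav, Matrix.mulVec_smul, h2v, smul_smul]
      rw [show l * l^2 = l^3 by ring]
    have h5v : ((Am * Am * Am) * (Am * Am)).mulVec v = (l^5) • v := by
      rw [← Matrix.mulVec_mulVec, h2v, Matrix.mulVec_smul, h3v, smul_smul]
      rw [show l^2 * l^3 = l^5 by ring]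
    have h5 := congrArg (fun M : Matrix (Fin p ⊕ Fin q) (Fin p ⊕ Fin q) ℝ => M.mulVec v) hA5
    rw [h5v, Matrix.sub_mulVec, Matrix.smul_mulVec, Matrix.smul_mulVec,
      h3v, hav, smul_smul, smul_smul] at h5
    obtain ⟨x, hx⟩ : ∃ x, v x ≠ 0 := by
      by_contra hcon
      push_neg at hcon
      exact hv (funext fun x => hcon x)
    have hscal : l^5 = X * l^3 - Y * l := by
      have := congrFun h5 x
      simp only [Pi.smul_apply, Pi.sub_apply, smul_eq_mul] at this
      have h' : (l^5 - (X * l^3 - Y * l)) * v x = 0 := by ring_nf; ring_nf at this; linarith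
      rcases mul_eq_zero.mp h' with h | h
      · linarith
      · exact absurd h hx
    have hfactor : l * (l^4 - X*l^2 + Y) = 0 := by linear_combination hscal
    rcases mul_eq_zero.mp hfactor with h0 | hq'
    · rw [h0, hμ_def]; exact Real.sqrt_nonneg _
    · have h2l : (2*l^2 - X)^2 = d := by rw [hd_def]; linear_combination 4*hq'
      have hle : 2*l^2 - X ≤ Real.sqrt d := by
        calc 2*l^2 - X ≤ |2*l^2 - X| := le_abs_self _
          _ = Real.sqrt ((2*l^2 - X)^2) := (Real.sqrt_sq_eq_abs _).symm
          _ = Real.sqrt d := by rw [h2l]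
      have hl2 : l^2 ≤ r1 := by rw [hr1_def]; linarith
      calc l ≤ |l| := le_abs_self l
        _ = Real.sqrt (l^2) := (Real.sqrt_sq_eq_abs l).symm
        _ ≤ Real.sqrt r1 := Real.sqrt_le_sqrt hl2
        _ = μ := hμ_def.symm


theorem stmt12 (p q e : ℕ) (hp : 0 < p) (he : 0 < e) (hpq : p ≤ q)
    (h1 : e ≤ p * q) (h2 : p * q - e ≤ q)
    (X Y : ℝ)
    (hX : X = 2 * (e : ℝ) - ((p : ℝ) * ((q : ℝ) - (p : ℝ) * (q : ℝ) + (e : ℝ))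
      + (q : ℝ) * ((p : ℝ) - 1)
      - ((q : ℝ) - (p : ℝ) * (q : ℝ) + (e : ℝ)) * ((p : ℝ) - 1)))
    (hY : Y = ((e : ℝ) - (p : ℝ) * ((q : ℝ) - (p : ℝ) * (q : ℝ) + (e : ℝ)))
      * ((e : ℝ) - (q : ℝ) * ((p : ℝ) - 1))) :
    specRad (KpqEbracket p q e) = Real.sqrt ((X + Real.sqrt (X^2 - 4 * Y)) / 2) := by
  exact main_aux p q e hp he hpq h1 h2 X Y hX hY _ _
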